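/- Let F, C be disjoint finite sets with a metric d on F ∪ C, let T > 0 and k ∈ ℕ, let (x, y) be a feasible solution to SC-LP(T, k), and let ε ∈ (0, 1). Then there exist ẏ : F → {0, 1} and ẋ : F × C → [0, 1] such that: (1) ∑_{i ∈ F} ẏ_i ≤ (1 + 4ε)·k; (2) ẋ_{ij} ≤ ẏ_i for all i, j, and for every j ∈ C, 1/(1 + ε) ≤ ∑_{i ∈ F} ẋ_{ij} ≤ 1; and (3) for every i ∈ F, L(i, ẋ) ≤ 12·(1 + (1 + ε)/ε²)·T·ẏ_i. -/

import Mathlib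

set_option maxHeartbeats 4000000

open Finset

private lemma exists_sorted_list {X : Type*} (s : Finset X) (f : X → ℝ) :
    ∃ L : List X, (∀ a, a ∈ L ↔ a ∈ s) ∧ L.Pairwise (fun a b => f a ≤ f b) := by
  classical
  induction s using Finset.strongInduction with
  | _ s ih =>
    rcases s.eq_empty_or_nonempty with rfl | hne
    · exact ⟨[], by simp, List.Pairwise.nil⟩
    · obtain ⟨a, ha, hmin⟩ := s.exists_min_image f hne
      obtain ⟨L, hL, hLs⟩ := ih (s.erase a) (Finset.erase_ssubset ha)
      refine ⟨a :: L, ?_, ?_⟩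
      · intro b
        simp only [List.mem_cons, hL, Finset.mem_erase]
        constructor
        · rintro (rfl | ⟨-, hb⟩)
          · exact ha
          · exact hb
        · intro hb
          by_cases hba : b = a
          · exact Or.inl hba
          · exact Or.inr ⟨hba, hb⟩
      · refine List.Pairwise.cons ?_ hLs
        intro b hb
        exact hmin b (Finset.mem_of_mem_erase ((hL b).mp hb))

private lemma core_greedy {X : Type*} (x : X → X → ℝ) (K : X → Finset X) (r : X → ℝ)
    (η θ : ℝ) (hθ : 0 ≤ θ) :
    ∀ L : List X, L.Pairwise (fun a b => r a ≤ r b) →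
      (∀ j ∈ L, θ + η ≤ ∑ i ∈ K j, x i j) →
      ∀ U : Finset X, ∃ (cl : List (X × Finset X)) (S : X → Finset X),
        (∀ p ∈ cl, p.1 ∈ L ∧ p.2 ⊆ K p.1 ∧ (∀ i ∈ p.2, i ∉ U) ∧ θ ≤ ∑ i ∈ p.2, x i p.1) ∧
        cl.Pairwise (fun p q => Disjoint p.2 q.2) ∧
        (∀ j ∈ L, S j ⊆ K j ∧ η ≤ ∑ i ∈ S j, x i j ∧
          ∀ i ∈ S j, i ∈ U ∨ ∃ p ∈ cl, i ∈ p.2 ∧ r p.1 ≤ r j) := by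
  classical
  intro L
  induction L with
  | nil =>
    intro _ _ U
    exact ⟨[], fun _ => ∅, by simp, List.Pairwise.nil, by simp⟩
  | cons j L' ih =>
    intro hsort hmass U
    rw [List.pairwise_cons] at hsort
    obtain ⟨hhead, hsort'⟩ := hsort
    have hmassj := hmass j (List.mem_cons_self)
    have hmass' : ∀ a ∈ L', θ + η ≤ ∑ i ∈ K a, x i a :=
      fun a ha => hmass a (List.mem_cons_of_mem j ha)
    by_cases hcov : η ≤ ∑ i ∈ (K j) ∩ U, x i j
    · obtain ⟨cl, S, h1, h2, h3⟩ := ih hsort' hmass' U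
      refine ⟨cl, Function.update S j ((K j) ∩ U), ?_, h2, ?_⟩
      · intro p hp
        obtain ⟨hp1, hp2, hp3, hp4⟩ := h1 p hp
        exact ⟨List.mem_cons_of_mem j hp1, hp2, hp3, hp4⟩
      · intro j' hj'
        by_cases hjj : j' = j
        · subst hjj
          rw [Function.update_self]
          exact ⟨Finset.inter_subset_left, hcov, fun i hi => Or.inl (Finset.mem_of_mem_inter_right hi)⟩
        · rw [Function.update_of_ne hjj]
          have hj'L : j' ∈ L' := by
            rcases List.mem_cons.mp hj' with h | h
            · exact absurd h hjj
            · exact h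
          exact h3 j' hj'L
    · -- j becomes a center
      set G := (K j) \ U with hG
      have hGmass : θ ≤ ∑ i ∈ G, x i j := by
        have hsplit : ∑ i ∈ (K j) ∩ U, x i j + ∑ i ∈ (K j) \ U, x i j = ∑ i ∈ K j, x i j :=
          Finset.sum_inter_add_sum_sdiff (K j) U (fun i => x i j)
        push_neg at hcov
        rw [hG]
        linarith
      obtain ⟨cl, S, h1, h2, h3⟩ := ih hsort' hmass' (U ∪ G)
      refine ⟨(j, G) :: cl, Function.update S j (K j), ?_, ?_, ?_⟩
      · intro p hp
        rcases List.mem_cons.mp hp with rfl | hp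
        · exact ⟨List.mem_cons_self, Finset.sdiff_subset, fun i hi => (Finset.mem_sdiff.mp hi).2,
            hGmass⟩
        · obtain ⟨hp1, hp2, hp3, hp4⟩ := h1 p hp
          refine ⟨List.mem_cons_of_mem j hp1, hp2, fun i hi => ?_, hp4⟩
          intro hiU
          exact hp3 i hi (Finset.mem_union_left _ hiU)
      · rw [List.pairwise_cons]
        constructor
        · intro p hp
          obtain ⟨-, -, hp3, -⟩ := h1 p hp
          rw [Finset.disjoint_left]
          intro i hiG hip
          exact hp3 i hip (Finset.mem_union_right _ hiG)
        · exact h2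
      · intro j' hj'
        by_cases hjj : j' = j
        · subst hjj
          rw [Function.update_self]
          refine ⟨le_refl _, le_trans (by linarith) hmassj, fun i hi => ?_⟩
          by_cases hiU : i ∈ U
          · exact Or.inl hiU
          · exact Or.inr ⟨(j', G), List.mem_cons_self, Finset.mem_sdiff.mpr ⟨hi, hiU⟩, le_refl _⟩
        · rw [Function.update_of_ne hjj]
          have hj'L : j' ∈ L' := by
            rcases List.mem_cons.mp hj' with h | h
            · exact absurd h hjj
            · exact h
          obtain ⟨hs1, hs2, hs3⟩ := h3 j' hj'L
          refine ⟨hs1, hs2, fun i hi => ?_⟩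
          rcases hs3 i hi with hiU | ⟨p, hp, hip, hrp⟩
          · rcases Finset.mem_union.mp hiU with h | h
            · exact Or.inl h
            · exact Or.inr ⟨(j, G), List.mem_cons_self, h, hhead j' hj'L⟩
          · exact Or.inr ⟨p, List.mem_cons_of_mem _ hp, hip, hrp⟩

/-- Feasibility for the LP relaxation `SC-LP(T, k)` of the star cover problem. -/
def SCLPFeasible {X : Type*} [MetricSpace X] (F C : Finset X) (T : ℝ) (k : ℕ)
    (x : X → X → ℝ) (y : X → ℝ) : Prop :=
  (∀ i ∈ F, ∀ j ∈ C, x i j ∈ Set.Icc (0 : ℝ) 1) ∧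
  (∀ i ∈ F, y i ∈ Set.Icc (0 : ℝ) 1) ∧
  (∀ i ∈ F, ∑ j ∈ C, dist i j * x i j ≤ T * y i) ∧
  (∑ i ∈ F, y i ≤ (k : ℝ)) ∧
  (∀ j ∈ C, ∑ i ∈ F, x i j = 1) ∧
  (∀ i ∈ F, ∀ j ∈ C, x i j ≤ y i) ∧
  (∀ i ∈ F, ∀ j ∈ C, T < dist i j → x i j = 0)

/-- The fractional-opening rounding for MLkSC (claim in the proof of Theorem 3):
from a feasible solution of SC-LP(T, k) one obtains an integral opening `ẏ` with
total at most `(1+4ε)k` and a fractional assignment `ẋ` serving at least a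
`1/(1+ε)` fraction of each client, with loads at most `12(1 + (1+ε)/ε²)·T·ẏ_i`. -/
theorem mlksc_rounding_fractional {X : Type*} [MetricSpace X]
    (F C : Finset X) (hFC : Disjoint F C) (T : ℝ) (hT : 0 < T) (k : ℕ)
    (x : X → X → ℝ) (y : X → ℝ) (hfeas : SCLPFeasible F C T k x y)
    (ε : ℝ) (hε0 : 0 < ε) (hε1 : ε < 1) :
    ∃ (ydot : X → ℝ) (xdot : X → X → ℝ),
      (∀ i ∈ F, ydot i = 0 ∨ ydot i = 1) ∧
      (∑ i ∈ F, ydot i ≤ (1 + 4 * ε) * k) ∧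
      (∀ i ∈ F, ∀ j ∈ C, xdot i j ∈ Set.Icc (0 : ℝ) 1) ∧
      (∀ i ∈ F, ∀ j ∈ C, xdot i j ≤ ydot i) ∧
      (∀ j ∈ C, 1 / (1 + ε) ≤ ∑ i ∈ F, xdot i j ∧ ∑ i ∈ F, xdot i j ≤ 1) ∧
      (∀ i ∈ F, ∑ j ∈ C, dist i j * xdot i j ≤
        12 * (1 + (1 + ε) / ε ^ 2) * T * ydot i) := by
  obtain ⟨hx01, hy01, hload, hysum, hxsum, hxy, -⟩ := hfeas
  classical
  have hε1' : (0:ℝ) < 1 + ε := by linarith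
  have hε2' : (0:ℝ) < 1 + 2*ε := by linarith
  -- basic defs
  obtain ⟨D, hD⟩ : ∃ D : X → ℝ, D = fun j => ∑ i ∈ F, dist i j * x i j := ⟨_, rfl⟩
  obtain ⟨r, hr⟩ : ∃ r : X → ℝ, r = fun j => (1+ε)/ε * D j := ⟨_, rfl⟩
  obtain ⟨K, hK⟩ : ∃ K : X → Finset X, K = fun j => F.filter (fun i => dist i j ≤ r j) := ⟨_, rfl⟩
  have hKF : ∀ j, K j ⊆ F := by intro j; rw [hK]; exact Finset.filter_subset _ _
  have hdK : ∀ j, ∀ i ∈ K j, dist i j ≤ r j := by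
    intro j i hi; rw [hK] at hi; exact (Finset.mem_filter.mp hi).2
  have hDnn : ∀ j ∈ C, 0 ≤ D j := by
    intro j hj; rw [hD]
    exact Finset.sum_nonneg fun i hi => mul_nonneg dist_nonneg (hx01 i hi j hj).1
  have hrnn : ∀ j ∈ C, 0 ≤ r j := by
    intro j hj; rw [hr]
    exact mul_nonneg (div_nonneg (by linarith) hε0.le) (hDnn j hj)
  -- Markov: kept mass
  have hkept : ∀ j ∈ C, 1/(1+ε) ≤ ∑ i ∈ K j, x i j := by
    intro j hj
    have hsplit : ∑ i ∈ (F.filter (fun i => dist i j ≤ r j)), x i j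
        + ∑ i ∈ (F.filter (fun i => ¬ dist i j ≤ r j)), x i j = ∑ i ∈ F, x i j :=
      Finset.sum_filter_add_sum_filter_not F _ _
    have htail : ∑ i ∈ (F.filter (fun i => ¬ dist i j ≤ r j)), x i j ≤ ε/(1+ε) := by
      rcases eq_or_lt_of_le (hrnn j hj) with hr0 | hrpos
      · -- r j = 0 : all far x are 0
        have : ∀ i ∈ F.filter (fun i => ¬ dist i j ≤ r j), x i j = 0 := by
          intro i hi
          rw [Finset.mem_filter] at hi
          have hd : 0 < dist i j := lt_of_le_of_lt (le_of_eq hr0) (lt_of_not_ge hi.2)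
          have hDj : D j = 0 := by
            have h1 : r j = 0 := hr0.symm
            rw [hr] at h1
            rcases mul_eq_zero.mp h1 with h | h
            · exfalso
              have : (1+ε)/ε > 0 := div_pos hε1' hε0
              linarith
            · exact h
          have hterm : dist i j * x i j = 0 := by
            have hnn : ∀ i' ∈ F, 0 ≤ dist i' j * x i' j :=
              fun i' hi' => mul_nonneg dist_nonneg (hx01 i' hi' j hj).1
            have hDj' : ∑ i ∈ F, dist i j * x i j = 0 := by simp only [hD] at hDj; exact hDj
            have := (Finset.sum_eq_zero_iff_of_nonneg hnn).mp hDj' i hi.1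
            exact this
          have := mul_eq_zero.mp hterm
          rcases this with h | h
          · exact absurd h (ne_of_gt hd)
          · exact h
        rw [Finset.sum_eq_zero this]
        positivity
      · -- r j > 0
        have hb : r j * ∑ i ∈ (F.filter (fun i => ¬ dist i j ≤ r j)), x i j ≤ D j := by
          rw [Finset.mul_sum, hD]
          refine le_trans (Finset.sum_le_sum ?_) (Finset.sum_le_sum_of_subset_of_nonneg
            (Finset.filter_subset _ _) ?_)
          · intro i hi
            rw [Finset.mem_filter] at hi
            exact mul_le_mul_of_nonneg_right (le_of_lt (lt_of_not_ge hi.2))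
              (hx01 i hi.1 j hj).1
          · intro i hi _
            exact mul_nonneg dist_nonneg (hx01 i hi j hj).1
        have hDr : D j = ε/(1+ε) * r j := by
          rw [hr]; field_simp
        rw [hDr] at hb
        have := le_of_mul_le_mul_left (by linarith [hb] : r j * ∑ i ∈ (F.filter (fun i => ¬ dist i j ≤ r j)), x i j ≤ r j * (ε/(1+ε))) hrpos
        linarith [this]
    have hKsum : ∑ i ∈ K j, x i j = ∑ i ∈ (F.filter (fun i => dist i j ≤ r j)), x i j := by
      rw [hK]
    rw [hKsum]
    have h1 : ∑ i ∈ F, x i j = 1 := hxsum j hj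
    have : 1/(1+ε) = 1 - ε/(1+ε) := by field_simp; ring
    linarith
  -- constants
  obtain ⟨θ, hθdef⟩ : ∃ θ : ℝ, θ = 1/(1+2*ε) := ⟨_, rfl⟩
  obtain ⟨η, hηdef⟩ : ∃ η : ℝ, η = ε/((1+ε)*(1+2*ε)) := ⟨_, rfl⟩
  have hθpos : 0 < θ := by rw [hθdef]; positivity
  have hηpos : 0 < η := by rw [hηdef]; positivity
  have hθη : θ + η = 1/(1+ε) := by
    rw [hθdef, hηdef]; field_simp; ring
  -- sorted clients and greedy core
  obtain ⟨L, hLmem, hLsort⟩ := exists_sorted_list C r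
  obtain ⟨cl, S, h1, h2, h3⟩ := core_greedy x K r η θ hθpos.le L hLsort
    (fun j hj => by rw [hθη]; exact hkept j ((hLmem j).mp hj)) ∅
  -- cluster indexing
  obtain ⟨c, hc⟩ : ∃ c : Fin cl.length → X, c = fun t => (cl.get t).1 := ⟨_, rfl⟩
  obtain ⟨G, hGdef⟩ : ∃ G : Fin cl.length → Finset X, G = fun t => (cl.get t).2 := ⟨_, rfl⟩
  have hclget : ∀ t : Fin cl.length, (c t, G t) ∈ cl := by
    intro t
    rw [hc, hGdef]
    simpa using List.get_mem cl t.1 t.2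
  have hcC : ∀ t, c t ∈ C := fun t => (hLmem _).mp (h1 _ (hclget t)).1
  have hGK : ∀ t, G t ⊆ K (c t) := fun t => (h1 _ (hclget t)).2.1
  have hGmass : ∀ t, θ ≤ ∑ i ∈ G t, x i (c t) := fun t => (h1 _ (hclget t)).2.2.2
  have hGF : ∀ t, G t ⊆ F := fun t => (hGK t).trans (hKF _)
  have hGdisj : ∀ t s : Fin cl.length, t ≠ s → Disjoint (G t) (G s) := by
    intro t s hts
    have hp := List.pairwise_iff_get.mp h2
    rcases lt_trichotomy t s with h | h | h
    · have := hp _ _ h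
      rw [hGdef]; exact this
    · exact absurd h hts
    · have := hp _ _ h
      rw [hGdef]; exact (this).symm
  have hGne : ∀ t, (G t).Nonempty := by
    intro t
    rcases Finset.eq_empty_or_nonempty (G t) with h | h
    · exfalso; have := hGmass t; rw [h] at this; simp at this; linarith
    · exact h
  have huniq : ∀ (i : X) (t s : Fin cl.length), i ∈ G t → i ∈ G s → t = s := by
    intro i t s hit his
    by_contra hts
    exact (Finset.disjoint_left.mp (hGdisj t s hts)) hit his
  have hSK : ∀ j ∈ C, S j ⊆ K j := fun j hj => (h3 j ((hLmem j).mpr hj)).1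
  have hSF : ∀ j ∈ C, S j ⊆ F := fun j hj => (hSK j hj).trans (hKF j)
  have hSmass : ∀ j ∈ C, η ≤ ∑ i ∈ S j, x i j := fun j hj => (h3 j ((hLmem j).mpr hj)).2.1
  have hSsub : ∀ j ∈ C, ∀ i ∈ S j, ∃ t : Fin cl.length, i ∈ G t ∧ r (c t) ≤ r j := by
    intro j hj i hi
    rcases (h3 j ((hLmem j).mpr hj)).2.2 i hi with h | ⟨p, hp, hip, hrp⟩
    · simp at h
    · obtain ⟨n, hn⟩ := List.mem_iff_get.mp hp
      refine ⟨n, ?_, ?_⟩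
      · rw [hGdef]; simp only []; rw [hn]; exact hip
      · rw [hc]; simp only []; rw [hn]; exact hrp
  have hrct : ∀ j ∈ C, ∀ t : Fin cl.length, ∀ i, i ∈ S j → i ∈ G t → r (c t) ≤ r j := by
    intro j hj t i hiS hiG
    obtain ⟨t', hit', hrt'⟩ := hSsub j hj i hiS
    rwa [huniq i t t' hiG hit']
  -- boosted fractional assignment
  obtain ⟨B, hBdef⟩ : ∃ B : ℝ, B = (1+2*ε)/ε := ⟨_, rfl⟩
  have hB1 : 1 ≤ B := by rw [hBdef]; rw [le_div_iff₀ hε0]; linarith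
  obtain ⟨A, hAdef⟩ : ∃ A : X → ℝ, A = fun j => ∑ i ∈ S j, x i j := ⟨_, rfl⟩
  obtain ⟨bet, hbet⟩ : ∃ bet : X → ℝ, bet = fun j => max 1 (1/((1+ε) * A j)) := ⟨_, rfl⟩
  obtain ⟨Sig, hSig⟩ : ∃ Sig : X → ℝ, Sig = fun j => ∑ i ∈ S j, min 1 (bet j * x i j) := ⟨_, rfl⟩
  obtain ⟨gam, hgam⟩ : ∃ gam : X → ℝ, gam = fun j => (1/(1+ε)) / Sig j := ⟨_, rfl⟩
  obtain ⟨xt, hxt⟩ : ∃ xt : X → X → ℝ,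
      xt = fun i j => if i ∈ S j then gam j * min 1 (bet j * x i j) else 0 := ⟨_, rfl⟩
  have hAeta : ∀ j ∈ C, η ≤ A j := by intro j hj; rw [hAdef]; exact hSmass j hj
  have hApos : ∀ j ∈ C, 0 < A j := fun j hj => lt_of_lt_of_le hηpos (hAeta j hj)
  have hbet1 : ∀ j, 1 ≤ bet j := by intro j; rw [hbet]; exact le_max_left _ _
  have hbetB : ∀ j ∈ C, bet j ≤ B := by
    intro j hj
    rw [hbet]
    refine max_le hB1 ?_
    have h1 : (1+ε) * η ≤ (1+ε) * A j := by
      have := hAeta j hj; nlinarith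
    have h2 : 0 < (1+ε) * η := by positivity
    have h3 : 1/((1+ε) * A j) ≤ 1/((1+ε) * η) := one_div_le_one_div_of_le h2 h1
    have h4 : 1/((1+ε) * η) = B := by
      rw [hηdef, hBdef]
      rw [show (1+ε) * (ε/((1+ε)*(1+2*ε))) = ε/(1+2*ε) by field_simp]
      rw [one_div_div]
    linarith
  have hbetpos : ∀ j, 0 < bet j := fun j => lt_of_lt_of_le one_pos (hbet1 j)
  have hminnn : ∀ j ∈ C, ∀ i ∈ S j, 0 ≤ min 1 (bet j * x i j) := by
    intro j hj i hi
    exact le_min zero_le_one (mul_nonneg (hbetpos j).le (hx01 i (hSF j hj hi) j hj).1)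
  have hSigge : ∀ j ∈ C, 1/(1+ε) ≤ Sig j := by
    intro j hj
    simp only [hSig]
    by_cases hex : ∃ i ∈ S j, 1 ≤ bet j * x i j
    · obtain ⟨i0, hi0, hbx⟩ := hex
      have h1 : min 1 (bet j * x i0 j) = 1 := min_eq_left hbx
      have h2 : (1:ℝ) ≤ ∑ i ∈ S j, min 1 (bet j * x i j) := by
        calc (1:ℝ) = min 1 (bet j * x i0 j) := h1.symm
        _ ≤ ∑ i ∈ S j, min 1 (bet j * x i j) :=
          Finset.single_le_sum (hminnn j hj) hi0
      have : 1/(1+ε) ≤ (1:ℝ) := by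
        rw [div_le_one hε1']; linarith
      linarith
    · push_neg at hex
      have heq : ∑ i ∈ S j, min 1 (bet j * x i j) = bet j * A j := by
        rw [hAdef, Finset.mul_sum]
        exact Finset.sum_congr rfl fun i hi => min_eq_right (hex i hi).le
      rw [heq]
      have h1 : 1/((1+ε) * A j) * A j ≤ bet j * A j :=
        mul_le_mul_of_nonneg_right (by rw [hbet]; exact le_max_right _ _) (hApos j hj).le
      have h2 : 1/((1+ε) * A j) * A j = 1/(1+ε) := by
        have hAne : A j ≠ 0 := ne_of_gt (hApos j hj)
        field_simp
      linarith
  have hSigpos : ∀ j ∈ C, 0 < Sig j := by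
    intro j hj
    have := hSigge j hj
    have h2 : (0:ℝ) < 1/(1+ε) := div_pos one_pos hε1'
    linarith
  have hgam01 : ∀ j ∈ C, 0 ≤ gam j ∧ gam j ≤ 1 := by
    intro j hj
    rw [hgam]
    constructor
    · exact div_nonneg (div_nonneg zero_le_one hε1'.le) (hSigpos j hj).le
    · rw [div_le_one (hSigpos j hj)]
      exact hSigge j hj
  have hxtnn : ∀ j ∈ C, ∀ i, 0 ≤ xt i j := by
    intro j hj i
    simp only [hxt]
    by_cases hi : i ∈ S j
    · rw [if_pos hi]
      exact mul_nonneg (hgam01 j hj).1 (hminnn j hj i hi)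
    · rw [if_neg hi]
  have hxtsupp : ∀ j, ∀ i, i ∉ S j → xt i j = 0 := by
    intro j i hi; simp only [hxt]; exact if_neg hi
  have hxtsum : ∀ j ∈ C, ∑ i ∈ S j, xt i j = 1/(1+ε) := by
    intro j hj
    have : ∑ i ∈ S j, xt i j = gam j * Sig j := by
      rw [hSig, Finset.mul_sum]
      refine Finset.sum_congr rfl fun i hi => ?_
      simp only [hxt]; rw [if_pos hi]
    rw [this, hgam]
    have hSne : Sig j ≠ 0 := ne_of_gt (hSigpos j hj)
    field_simp
  have hxtleB : ∀ j ∈ C, ∀ i ∈ F, xt i j ≤ B * x i j := by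
    intro j hj i hiF
    simp only [hxt]
    by_cases hi : i ∈ S j
    · rw [if_pos hi]
      calc gam j * min 1 (bet j * x i j) ≤ 1 * (bet j * x i j) := by
            refine mul_le_mul (hgam01 j hj).2 (min_le_right _ _) (hminnn j hj i hi) zero_le_one
      _ = bet j * x i j := one_mul _
      _ ≤ B * x i j := mul_le_mul_of_nonneg_right (hbetB j hj) (hx01 i hiF j hj).1
    · rw [if_neg hi]
      exact mul_nonneg (le_trans zero_le_one hB1) (hx01 i hiF j hj).1
  have hxtle1 : ∀ j ∈ C, ∀ i, xt i j ≤ 1 := by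
    intro j hj i
    simp only [hxt]
    by_cases hi : i ∈ S j
    · rw [if_pos hi]
      calc gam j * min 1 (bet j * x i j) ≤ 1 * 1 := by
            refine mul_le_mul (hgam01 j hj).2 (min_le_left _ _) (hminnn j hj i hi) zero_le_one
      _ = 1 := one_mul _
    · rw [if_neg hi]; exact zero_le_one
  -- partition of S j by grounds
  have hpart : ∀ j ∈ C, ∀ g : X → ℝ,
      (∑ t : Fin cl.length, ∑ i ∈ S j ∩ G t, g i) = ∑ i ∈ S j, g i := by
    intro j hj g
    have hbi : Finset.univ.biUnion (fun t => S j ∩ G t) = S j := by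
      ext i
      simp only [Finset.mem_biUnion, Finset.mem_univ, true_and, Finset.mem_inter]
      constructor
      · rintro ⟨t, hiS, -⟩; exact hiS
      · intro hi
        obtain ⟨t, hiG, -⟩ := hSsub j hj i hi
        exact ⟨t, hi, hiG⟩
    have hdisj : (↑(Finset.univ : Finset (Fin cl.length)) : Set (Fin cl.length)).PairwiseDisjoint
        (fun t => S j ∩ G t) := by
      intro a _ b _ hab
      exact Finset.disjoint_left.mpr fun i hia hib =>
        (Finset.disjoint_left.mp (hGdisj a b hab)) (Finset.mem_of_mem_inter_right hia)
          (Finset.mem_of_mem_inter_right hib)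
    have hsb := Finset.sum_biUnion (f := g) hdisj
    rw [← hsb, hbi]
  -- opening numbers
  obtain ⟨lam, hlam⟩ : ∃ lam : ℝ, lam = 2*ε^2/(3*(1+ε)) := ⟨_, rfl⟩
  have hlampos : 0 < lam := by rw [hlam]; positivity
  obtain ⟨W, hW⟩ : ∃ W : Fin cl.length → ℝ, W = fun t =>
      ∑ j ∈ C, ∑ i ∈ S j ∩ G t, xt i j * (dist i j + 2 * r (c t)) := ⟨_, rfl⟩
  have hWnn : ∀ t, 0 ≤ W t := by
    intro t
    rw [hW]
    refine Finset.sum_nonneg fun j hj => Finset.sum_nonneg fun i hi => ?_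
    refine mul_nonneg (hxtnn j hj i) ?_
    have := hrnn (c t) (hcC t)
    have := dist_nonneg (x := i) (y := j)
    linarith
  obtain ⟨n, hn⟩ : ∃ n : Fin cl.length → ℕ,
      n = fun t => min (G t).card (max 1 ⌈lam * W t / T⌉₊) := ⟨_, rfl⟩
  have hn1 : ∀ t, 1 ≤ n t := by
    intro t
    rw [hn]
    exact le_min (Finset.card_pos.mpr (hGne t)) (le_max_left _ _)
  have hnpos : ∀ t, (0:ℝ) < (n t : ℝ) := by
    intro t
    exact_mod_cast Nat.lt_of_lt_of_le Nat.zero_lt_one (hn1 t)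
  have hncard : ∀ t, n t ≤ (G t).card := by intro t; rw [hn]; exact min_le_left _ _
  have hnub : ∀ t, (n t : ℝ) ≤ 1 + lam * W t / T := by
    intro t
    have hz : 0 ≤ lam * W t / T := div_nonneg (mul_nonneg hlampos.le (hWnn t)) hT.le
    have h1 : (n t : ℕ) ≤ max 1 ⌈lam * W t / T⌉₊ := by rw [hn]; exact min_le_right _ _
    have h2 : ((max 1 ⌈lam * W t / T⌉₊ : ℕ) : ℝ) = max 1 ((⌈lam * W t / T⌉₊ : ℕ) : ℝ) := by
      rw [Nat.cast_max]; norm_num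
    have h3 : ((⌈lam * W t / T⌉₊ : ℕ) : ℝ) < lam * W t / T + 1 := Nat.ceil_lt_add_one hz
    have h4 : (n t : ℝ) ≤ max 1 ((⌈lam * W t / T⌉₊ : ℕ) : ℝ) := by
      rw [← h2]; exact_mod_cast h1
    rcases max_cases (1:ℝ) ((⌈lam * W t / T⌉₊ : ℕ) : ℝ) with ⟨hmax, -⟩ | ⟨hmax, -⟩ <;>
      rw [hmax] at h4 <;> linarith
  -- choose open sets
  have hex : ∀ t : Fin cl.length, ∃ s ⊆ G t, s.card = n t :=
    fun t => Finset.exists_subset_card_eq (hncard t)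
  choose St hStG hStcard using hex
  obtain ⟨O, hO⟩ : ∃ O : Finset X, O = Finset.univ.biUnion St := ⟨_, rfl⟩
  have hOF : O ⊆ F := by
    rw [hO]
    intro i hi
    obtain ⟨t, -, hit⟩ := Finset.mem_biUnion.mp hi
    exact hGF t (hStG t hit)
  have hStO : ∀ t, ∀ i ∈ St t, i ∈ O := by
    intro t i hi
    rw [hO]
    exact Finset.mem_biUnion.mpr ⟨t, Finset.mem_univ t, hi⟩
  have huniqSt : ∀ (i : X) (t s : Fin cl.length), i ∈ St t → i ∈ St s → t = s :=
    fun i t s hit his => huniq i t s (hStG t hit) (hStG s his)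
  -- the rounded solution
  obtain ⟨ydot, hydot⟩ : ∃ ydot : X → ℝ, ydot = fun i => if i ∈ O then (1:ℝ) else 0 := ⟨_, rfl⟩
  obtain ⟨xdot, hxdot⟩ : ∃ xdot : X → X → ℝ, xdot = fun i' j =>
      ∑ t : Fin cl.length, if i' ∈ St t then
        xt i' j + (∑ i ∈ (G t \ St t) ∩ S j, xt i j) / (n t) else 0 := ⟨_, rfl⟩
  have hxdot_eq : ∀ (i' : X) (t0 : Fin cl.length), i' ∈ St t0 → ∀ j,
      xdot i' j = xt i' j + (∑ i ∈ (G t0 \ St t0) ∩ S j, xt i j) / (n t0) := by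
    intro i' t0 hi' j
    rw [hxdot]
    simp only []
    rw [Finset.sum_eq_single_of_mem t0 (Finset.mem_univ t0)]
    · rw [if_pos hi']
    · intro b _ hb
      rw [if_neg]
      intro hib
      exact hb (huniqSt i' b t0 hib hi')
  have hxdot_zero : ∀ (i' : X), i' ∉ O → ∀ j, xdot i' j = 0 := by
    intro i' hi' j
    rw [hxdot]
    simp only []
    refine Finset.sum_eq_zero fun t _ => ?_
    rw [if_neg]
    intro hit
    exact hi' (hStO t i' hit)
  -- coverage
  have hsplitG : ∀ (t : Fin cl.length) j, ∑ i ∈ St t, xt i j + ∑ i ∈ (G t \ St t) ∩ S j, xt i j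
      = ∑ i ∈ G t ∩ S j, xt i j := by
    intro t j
    have h1 : ∑ i ∈ St t, xt i j = ∑ i ∈ St t ∩ S j, xt i j := by
      refine (Finset.sum_subset Finset.inter_subset_left fun i hi hni => ?_).symm
      refine hxtsupp j i fun hiS => hni (Finset.mem_inter.mpr ⟨hi, hiS⟩)
    have h2 : St t ∩ S j ∪ (G t \ St t) ∩ S j = G t ∩ S j := by
      rw [← Finset.union_inter_distrib_right, Finset.union_sdiff_of_subset (hStG t)]
    have h3 : Disjoint (St t ∩ S j) ((G t \ St t) ∩ S j) :=
      Finset.disjoint_of_subset_left Finset.inter_subset_left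
        (Finset.disjoint_of_subset_right Finset.inter_subset_left Finset.disjoint_sdiff)
    rw [h1, ← Finset.sum_union h3, h2]
  have hcover : ∀ j ∈ C, ∑ i ∈ F, xdot i j = 1/(1+ε) := by
    intro j hj
    have step1 : ∑ i ∈ F, xdot i j = ∑ t : Fin cl.length, ∑ i' ∈ F,
        (if i' ∈ St t then xt i' j + (∑ i ∈ (G t \ St t) ∩ S j, xt i j) / (n t) else 0) := by
      rw [hxdot]
      exact Finset.sum_comm
    have step2 : ∀ t : Fin cl.length, (∑ i' ∈ F,
        (if i' ∈ St t then xt i' j + (∑ i ∈ (G t \ St t) ∩ S j, xt i j) / (n t) else 0))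
        = ∑ i ∈ G t ∩ S j, xt i j := by
      intro t
      rw [Finset.sum_ite_mem, Finset.inter_eq_right.mpr fun i hi => hGF t (hStG t hi)]
      rw [Finset.sum_add_distrib, Finset.sum_const, hStcard t, nsmul_eq_mul]
      rw [mul_div_cancel₀ _ (ne_of_gt (hnpos t))]
      exact hsplitG t j
    rw [step1]
    rw [Finset.sum_congr rfl fun t _ => step2 t]
    rw [Finset.sum_congr rfl fun t (_ : t ∈ Finset.univ) => (by rw [Finset.inter_comm] :
      ∑ i ∈ G t ∩ S j, xt i j = ∑ i ∈ S j ∩ G t, xt i j)]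
    rw [hpart j hj (fun i => xt i j)]
    exact hxtsum j hj
  -- budget
  have hydot_sum : ∑ i ∈ F, ydot i = (O.card : ℝ) := by
    rw [hydot]
    simp only []
    rw [Finset.sum_ite_mem, Finset.inter_eq_right.mpr hOF, Finset.sum_const, nsmul_eq_mul, mul_one]
  have hcardO : O.card = ∑ t : Fin cl.length, n t := by
    rw [hO, Finset.card_biUnion]
    · exact Finset.sum_congr rfl fun t _ => hStcard t
    · intro a _ b _ hab
      exact Finset.disjoint_of_subset_left (hStG a) (Finset.disjoint_of_subset_right (hStG b)
        (hGdisj a b hab))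
  have hDsum : ∑ j ∈ C, D j ≤ T * k := by
    have h1 : ∑ j ∈ C, D j = ∑ i ∈ F, ∑ j ∈ C, dist i j * x i j := by
      rw [show ∑ j ∈ C, D j = ∑ j ∈ C, ∑ i ∈ F, dist i j * x i j from
        Finset.sum_congr rfl fun j _ => by rw [hD]]
      exact Finset.sum_comm
    rw [h1]
    calc ∑ i ∈ F, ∑ j ∈ C, dist i j * x i j ≤ ∑ i ∈ F, T * y i :=
          Finset.sum_le_sum fun i hi => hload i hi
    _ = T * ∑ i ∈ F, y i := by rw [Finset.mul_sum]
    _ ≤ T * k := mul_le_mul_of_nonneg_left hysum hT.le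
  have hWsum : ∑ t : Fin cl.length, W t ≤ 3/ε * (T * k) := by
    have step1 : ∑ t : Fin cl.length, W t = ∑ j ∈ C, ∑ t : Fin cl.length,
        ∑ i ∈ S j ∩ G t, xt i j * (dist i j + 2 * r (c t)) := by
      rw [show ∑ t : Fin cl.length, W t = ∑ t : Fin cl.length, ∑ j ∈ C,
        ∑ i ∈ S j ∩ G t, xt i j * (dist i j + 2 * r (c t)) from
        Finset.sum_congr rfl fun t _ => by rw [hW]]
      exact Finset.sum_comm
    rw [step1]
    have step2 : ∀ j ∈ C, ∑ t : Fin cl.length, ∑ i ∈ S j ∩ G t,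
        xt i j * (dist i j + 2 * r (c t)) ≤ 3/ε * D j := by
      intro j hj
      have hb : ∑ t : Fin cl.length, ∑ i ∈ S j ∩ G t, xt i j * (dist i j + 2 * r (c t))
          ≤ ∑ t : Fin cl.length, ∑ i ∈ S j ∩ G t, xt i j * (3 * r j) := by
        refine Finset.sum_le_sum fun t _ => Finset.sum_le_sum fun i hi => ?_
        have hiS : i ∈ S j := Finset.mem_of_mem_inter_left hi
        have hiG : i ∈ G t := Finset.mem_of_mem_inter_right hi
        have hd : dist i j ≤ r j := hdK j i (hSK j hj hiS)
        have hrc : r (c t) ≤ r j := hrct j hj t i hiS hiG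
        exact mul_le_mul_of_nonneg_left (by linarith) (hxtnn j hj i)
      have heq : ∑ t : Fin cl.length, ∑ i ∈ S j ∩ G t, xt i j * (3 * r j)
          = (1/(1+ε)) * (3 * r j) := by
        rw [hpart j hj (fun i => xt i j * (3 * r j)), ← Finset.sum_mul, hxtsum j hj]
      have heq2 : (1/(1+ε)) * (3 * r j) = 3/ε * D j := by
        rw [hr]
        field_simp
      linarith
    calc ∑ j ∈ C, ∑ t : Fin cl.length, ∑ i ∈ S j ∩ G t, xt i j * (dist i j + 2 * r (c t))
        ≤ ∑ j ∈ C, 3/ε * D j := Finset.sum_le_sum step2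
    _ = 3/ε * ∑ j ∈ C, D j := by rw [Finset.mul_sum]
    _ ≤ 3/ε * (T * k) := mul_le_mul_of_nonneg_left hDsum (by positivity)
  have hmbound : (cl.length : ℝ) ≤ (1+2*ε) * k := by
    have h1 : (cl.length : ℝ) * θ ≤ k := by
      calc (cl.length : ℝ) * θ = ∑ _t : Fin cl.length, θ := by
            rw [Finset.sum_const, Finset.card_univ, Fintype.card_fin, nsmul_eq_mul]
      _ ≤ ∑ t : Fin cl.length, ∑ i ∈ G t, x i (c t) := Finset.sum_le_sum fun t _ => hGmass t
      _ ≤ ∑ t : Fin cl.length, ∑ i ∈ G t, y i := by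
            refine Finset.sum_le_sum fun t _ => Finset.sum_le_sum fun i hi => ?_
            exact hxy i (hGF t hi) (c t) (hcC t)
      _ = ∑ i ∈ Finset.univ.biUnion G, y i := by
            refine (Finset.sum_biUnion ?_).symm
            intro a _ b _ hab
            exact hGdisj a b hab
      _ ≤ ∑ i ∈ F, y i := by
            refine Finset.sum_le_sum_of_subset_of_nonneg ?_ fun i hi _ => (hy01 i hi).1
            intro i hi
            obtain ⟨t, -, hit⟩ := Finset.mem_biUnion.mp hi
            exact hGF t hit
      _ ≤ k := hysum
    have hθval : θ * (1+2*ε) = 1 := by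
      rw [hθdef]
      field_simp
    nlinarith [mul_le_mul_of_nonneg_right h1 (le_of_lt hε2'), hθval]
  have hbudget : ∑ i ∈ F, ydot i ≤ (1 + 4*ε) * k := by
    rw [hydot_sum, hcardO]
    push_cast
    calc ∑ t : Fin cl.length, (n t : ℝ) ≤ ∑ t : Fin cl.length, (1 + lam * W t / T) :=
          Finset.sum_le_sum fun t _ => hnub t
    _ = (cl.length : ℝ) + (lam/T) * ∑ t : Fin cl.length, W t := by
          rw [Finset.sum_add_distrib, Finset.sum_const, Finset.card_univ, Fintype.card_fin,
            nsmul_eq_mul, mul_one, Finset.mul_sum]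
          congr 1
          exact Finset.sum_congr rfl fun t _ => by ring
    _ ≤ (1+2*ε) * k + (lam/T) * (3/ε * (T * k)) := by
          refine add_le_add hmbound (mul_le_mul_of_nonneg_left hWsum ?_)
          positivity
    _ ≤ (1 + 4*ε) * k := by
          have hk0 : (0:ℝ) ≤ k := Nat.cast_nonneg k
          have he : (lam/T) * (3/ε * (T * k)) = 2*ε/(1+ε) * k := by
            rw [hlam]
            field_simp
          rw [he]
          have h2 : 2*ε/(1+ε) * k ≤ 2*ε * k := by
            refine mul_le_mul_of_nonneg_right ?_ hk0
            rw [div_le_iff₀ hε1']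
            nlinarith
          nlinarith
  -- pointwise bounds on xdot
  have hxdotnn : ∀ j ∈ C, ∀ i', 0 ≤ xdot i' j := by
    intro j hj i'
    rw [hxdot]
    refine Finset.sum_nonneg fun t _ => ?_
    by_cases hi : i' ∈ St t
    · rw [if_pos hi]
      refine add_nonneg (hxtnn j hj i') (div_nonneg ?_ (hnpos t).le)
      exact Finset.sum_nonneg fun i hiG => hxtnn j hj i
    · rw [if_neg hi]
  have hxdotle : ∀ j ∈ C, ∀ i' ∈ O, xdot i' j ≤ 1/(1+ε) := by
    intro j hj i' hi'
    obtain ⟨t0, -, hit0⟩ := Finset.mem_biUnion.mp (by rw [hO] at hi'; exact hi')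
    rw [hxdot_eq i' t0 hit0 j]
    set Z := ∑ i ∈ (G t0 \ St t0) ∩ S j, xt i j with hZ
    have hZnn : 0 ≤ Z := Finset.sum_nonneg fun i _ => hxtnn j hj i
    have hdiv : Z / (n t0) ≤ Z := by
      refine div_le_self hZnn ?_
      exact_mod_cast hn1 t0
    have hsum : xt i' j + Z ≤ ∑ i ∈ S j, xt i j := by
      by_cases hiS : i' ∈ S j
      · have hnotm : i' ∉ (G t0 \ St t0) ∩ S j := by
          intro h
          exact (Finset.mem_sdiff.mp (Finset.mem_of_mem_inter_left h)).2 hit0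
        have hins : xt i' j + Z = ∑ i ∈ insert i' ((G t0 \ St t0) ∩ S j), xt i j := by
          rw [Finset.sum_insert hnotm]
        rw [hins]
        refine Finset.sum_le_sum_of_subset_of_nonneg ?_ fun i hi _ => hxtnn j hj i
        intro i hi
        rcases Finset.mem_insert.mp hi with rfl | hi
        · exact hiS
        · exact Finset.mem_of_mem_inter_right hi
      · rw [hxtsupp j i' hiS, zero_add]
        refine Finset.sum_le_sum_of_subset_of_nonneg Finset.inter_subset_right
          fun i hi _ => hxtnn j hj i
    rw [← hxtsum j hj]
    linarith
  have honeover : 1/(1+ε) ≤ (1:ℝ) := by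
    rw [div_le_one hε1']
    linarith
  -- load bound
  have hcap : ∀ i0 ∈ F, ∑ j ∈ C, dist i0 j * xdot i0 j ≤ 12*(1+(1+ε)/ε^2)*T*ydot i0 := by
    intro i0 hi0
    by_cases hiO : i0 ∈ O
    · -- open facility
      have hy1 : ydot i0 = 1 := by rw [hydot]; exact if_pos hiO
      rw [hy1, mul_one]
      obtain ⟨t0, -, hit0⟩ := Finset.mem_biUnion.mp (by rw [hO] at hiO; exact hiO)
      have hstep : ∀ j ∈ C, dist i0 j * xdot i0 j = dist i0 j * xt i0 j
          + dist i0 j * ((∑ i ∈ (G t0 \ St t0) ∩ S j, xt i j) / (n t0)) := by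
        intro j hj
        rw [hxdot_eq i0 t0 hit0 j]
        ring
      rw [Finset.sum_congr rfl hstep, Finset.sum_add_distrib]
      -- part 1
      have hpart1 : ∑ j ∈ C, dist i0 j * xt i0 j ≤ B * T := by
        calc ∑ j ∈ C, dist i0 j * xt i0 j ≤ ∑ j ∈ C, dist i0 j * (B * x i0 j) :=
              Finset.sum_le_sum fun j hj =>
                mul_le_mul_of_nonneg_left (hxtleB j hj i0 hi0) dist_nonneg
        _ = B * ∑ j ∈ C, dist i0 j * x i0 j := by
              rw [Finset.mul_sum]
              exact Finset.sum_congr rfl fun j _ => by ring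
        _ ≤ B * (T * y i0) := mul_le_mul_of_nonneg_left (hload i0 hi0)
              (le_trans zero_le_one hB1)
        _ ≤ B * T := by
              have hy := (hy01 i0 hi0).2
              have hBT : 0 ≤ B * T := mul_nonneg (le_trans zero_le_one hB1) hT.le
              nlinarith [mul_le_mul_of_nonneg_left hy hBT]
      -- part 2
      have hd2 : dist i0 (c t0) ≤ r (c t0) := hdK (c t0) i0 (hGK t0 (hStG t0 hit0))
      have hpart2 : ∑ j ∈ C, dist i0 j * ((∑ i ∈ (G t0 \ St t0) ∩ S j, xt i j) / (n t0))
          ≤ W t0 / (n t0) := by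
        have hb : ∑ j ∈ C, dist i0 j * (∑ i ∈ (G t0 \ St t0) ∩ S j, xt i j) ≤ W t0 := by
          rw [hW]
          refine Finset.sum_le_sum fun j hj => ?_
          rw [Finset.mul_sum]
          calc ∑ i ∈ (G t0 \ St t0) ∩ S j, dist i0 j * xt i j
              ≤ ∑ i ∈ (G t0 \ St t0) ∩ S j, xt i j * (dist i j + 2 * r (c t0)) := by
                refine Finset.sum_le_sum fun i hi => ?_
                have hiG : i ∈ G t0 := (Finset.mem_sdiff.mp (Finset.mem_of_mem_inter_left hi)).1
                have hdi : dist i (c t0) ≤ r (c t0) := hdK (c t0) i (hGK t0 hiG)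
                have htri : dist i0 j ≤ dist i j + 2 * r (c t0) := by
                  have t1 : dist i0 j ≤ dist i0 (c t0) + dist (c t0) j := dist_triangle _ _ _
                  have t2 : dist (c t0) j ≤ dist (c t0) i + dist i j := dist_triangle _ _ _
                  have t3 : dist (c t0) i = dist i (c t0) := dist_comm _ _
                  linarith
                calc dist i0 j * xt i j ≤ (dist i j + 2 * r (c t0)) * xt i j :=
                      mul_le_mul_of_nonneg_right htri (hxtnn j hj i)
                _ = xt i j * (dist i j + 2 * r (c t0)) := by ring
          _ ≤ ∑ i ∈ S j ∩ G t0, xt i j * (dist i j + 2 * r (c t0)) := by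
                refine Finset.sum_le_sum_of_subset_of_nonneg ?_ fun i hi _ => ?_
                · intro i hi
                  refine Finset.mem_inter.mpr ⟨Finset.mem_of_mem_inter_right hi,
                    (Finset.mem_sdiff.mp (Finset.mem_of_mem_inter_left hi)).1⟩
                · refine mul_nonneg (hxtnn j hj i) ?_
                  have := hrnn (c t0) (hcC t0)
                  have := dist_nonneg (x := i) (y := j)
                  linarith
        calc ∑ j ∈ C, dist i0 j * ((∑ i ∈ (G t0 \ St t0) ∩ S j, xt i j) / (n t0))
            = (∑ j ∈ C, dist i0 j * (∑ i ∈ (G t0 \ St t0) ∩ S j, xt i j)) / (n t0) := by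
              rw [Finset.sum_div]
              exact Finset.sum_congr rfl fun j _ => by ring
        _ ≤ W t0 / (n t0) := by
              exact div_le_div_of_nonneg_right hb (hnpos t0).le |>.trans_eq rfl
      -- case analysis on whether the cluster is fully opened
      by_cases hcase : (G t0).card ≤ max 1 ⌈lam * W t0 / T⌉₊
      · -- fully opened : no rerouting
        have hnt : n t0 = (G t0).card := by rw [hn]; exact min_eq_left hcase
        have hSteq : St t0 = G t0 := by
          refine Finset.eq_of_subset_of_card_le (hStG t0) ?_
          rw [hStcard t0, hnt]
        have hzero : ∀ j ∈ C, dist i0 j * ((∑ i ∈ (G t0 \ St t0) ∩ S j, xt i j) / (n t0)) = 0 := by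
          intro j hj
          rw [hSteq, Finset.sdiff_self, Finset.empty_inter, Finset.sum_empty, zero_div, mul_zero]
        rw [Finset.sum_congr rfl hzero, Finset.sum_const, smul_zero, add_zero]
        have hTlam : 0 ≤ T/lam := div_nonneg hT.le hlampos.le
        have hfinal : B * T + T/lam ≤ 12*(1+(1+ε)/ε^2)*T := by
          rw [hBdef, hlam]
          have h1 : T/(2*ε^2/(3*(1+ε))) = 3*(1+ε)/(2*ε^2) * T := by field_simp
          rw [h1]
          have key : (1+2*ε)/ε + 3*(1+ε)/(2*ε^2) ≤ 12*(1+(1+ε)/ε^2) := by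
            have h2 : (1+2*ε)/ε + 3*(1+ε)/(2*ε^2) = ((1+2*ε)*(2*ε) + 3*(1+ε))/(2*ε^2) := by
              field_simp
            have h3 : 12*(1+(1+ε)/ε^2) = (12*ε^2 + 12*(1+ε))/ε^2 := by field_simp
            rw [h2, h3, div_le_div_iff₀ (by positivity) (by positivity)]
            nlinarith [sq_nonneg ε, hε0.le]
          nlinarith [key, hT.le]
        linarith
      · have hnt : n t0 = max 1 ⌈lam * W t0 / T⌉₊ := by
          rw [hn]; exact min_eq_right (le_of_lt (not_le.mp hcase))
        have hge : lam * W t0 / T ≤ (n t0 : ℝ) := by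
          rw [hnt]
          have h1 : lam * W t0 / T ≤ (⌈lam * W t0 / T⌉₊ : ℝ) := Nat.le_ceil _
          have h2 : ((⌈lam * W t0 / T⌉₊ : ℕ) : ℝ) ≤ ((max 1 ⌈lam * W t0 / T⌉₊ : ℕ) : ℝ) := by
            exact_mod_cast le_max_right _ _
          linarith
        have hWn : W t0 / (n t0) ≤ T / lam := by
          rw [div_le_div_iff₀ (hnpos t0) hlampos]
          have := (div_le_iff₀ hT).mp hge
          nlinarith
        have hfinal : B * T + T/lam ≤ 12*(1+(1+ε)/ε^2)*T := by
          rw [hBdef, hlam]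
          have h1 : T/(2*ε^2/(3*(1+ε))) = 3*(1+ε)/(2*ε^2) * T := by field_simp
          rw [h1]
          have key : (1+2*ε)/ε + 3*(1+ε)/(2*ε^2) ≤ 12*(1+(1+ε)/ε^2) := by
            have h2 : (1+2*ε)/ε + 3*(1+ε)/(2*ε^2) = ((1+2*ε)*(2*ε) + 3*(1+ε))/(2*ε^2) := by
              field_simp
            have h3 : 12*(1+(1+ε)/ε^2) = (12*ε^2 + 12*(1+ε))/ε^2 := by field_simp
            rw [h2, h3, div_le_div_iff₀ (by positivity) (by positivity)]
            nlinarith [sq_nonneg ε, hε0.le]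
          nlinarith [key, hT.le]
        linarith
    · -- closed facility
      have hy0 : ydot i0 = 0 := by rw [hydot]; exact if_neg hiO
      rw [hy0, mul_zero]
      have : ∀ j ∈ C, dist i0 j * xdot i0 j = 0 := by
        intro j hj
        rw [hxdot_zero i0 hiO j, mul_zero]
      rw [Finset.sum_congr rfl this, Finset.sum_const, smul_zero]
  -- assemble
  refine ⟨ydot, xdot, ?_, hbudget, ?_, ?_, ?_, hcap⟩
  · intro i _
    rw [hydot]
    by_cases hi : i ∈ O
    · exact Or.inr (if_pos hi)
    · exact Or.inl (if_neg hi)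
  · intro i hi j hj
    constructor
    · exact hxdotnn j hj i
    · by_cases hiO : i ∈ O
      · exact le_trans (hxdotle j hj i hiO) honeover
      · rw [hxdot_zero i hiO j]
        exact zero_le_one
  · intro i hi j hj
    by_cases hiO : i ∈ O
    · simp only [hydot]
      rw [if_pos hiO]
      exact le_trans (hxdotle j hj i hiO) honeover
    · rw [hxdot_zero i hiO j]
      simp only [hydot]
      rw [if_neg hiO]
  · intro j hj
    rw [hcover j hj]
    exact ⟨le_refl _, honeover⟩
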